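/- Let d ∈ ℝ, δ ≥ 0, and let C : ℝ² \ {0} → ℝ be continuously differentiable, homogeneous of degree d (C(βq) = |β|^d C(q) for all β ≠ 0 and q ≠ 0), convex on the probability simplex Ξ_2 = {(ξ_1,ξ_2) : ξ_1, ξ_2 ≥ 0, ξ_1 + ξ_2 = 1}, and suppose that for every ξ ∈ Ξ_2 and each j ∈ {1,2} with ξ_j > 0 one has ∂C/∂ξ_j(ξ) − (d−1)C(ξ) > δ. Then C(ξ) ≥ max(C_1·ξ_1 + δ·ξ_2, δ·ξ_1 + C_2·ξ_2) for all ξ ∈ Ξ_2, where C_1 = C(1,0) and C_2 = C(0,1). -/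

import Mathlib

private lemma key0 (δ : ℝ) (h : ℝ → ℝ) (hd : Differentiable ℝ h)
    (hcond : ∀ t ∈ Set.Ioo (0:ℝ) 1, t * deriv h t < h t - δ) :
    ∀ t ∈ Set.Ioc (0:ℝ) 1, (h 1 - δ) * t ≤ h t - δ := by
  set H : ℝ → ℝ := fun t => (h t - δ) / t with hH
  have hHd : ∀ t ∈ Set.Ioo (0:ℝ) 1,
      HasDerivAt H ((deriv h t * t - (h t - δ) * 1) / t ^ 2) t := by
    intro t ht
    exact ((hd t).hasDerivAt.sub_const δ).div (hasDerivAt_id t) ht.1.ne'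
  have hanti : AntitoneOn H (Set.Ioc 0 1) := by
    apply antitoneOn_of_deriv_nonpos (convex_Ioc 0 1)
    · exact ((hd.continuous.sub continuous_const).continuousOn).div continuousOn_id
        (fun t ht => ht.1.ne')
    · rw [interior_Ioc]
      intro t ht
      exact (hHd t ht).differentiableAt.differentiableWithinAt
    · rw [interior_Ioc]
      intro t ht
      rw [(hHd t ht).deriv]
      have h1 := hcond t ht
      have h2 : (0:ℝ) < t ^ 2 := pow_pos ht.1 2
      apply div_nonpos_of_nonpos_of_nonneg _ h2.le
      nlinarith [h1]
  intro t ht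
  have h1 : H 1 ≤ H t := hanti ht (Set.right_mem_Ioc.2 one_pos) ht.2
  have h2 : H 1 = h 1 - δ := by simp [hH]
  rw [h2] at h1
  have h3 := (le_div_iff₀ ht.1).1 h1
  linarith

private lemma euler2 (d : ℝ) (C : (Fin 2 → ℝ) → ℝ)
    (hsmooth : ContDiffOn ℝ 1 C {(0 : Fin 2 → ℝ)}ᶜ)
    (hhom : ∀ β : ℝ, β ≠ 0 → ∀ q : Fin 2 → ℝ, q ≠ 0 → C (β • q) = |β| ^ d * C q)
    (ξ : Fin 2 → ℝ) (hξ : ξ ≠ 0) :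
    fderiv ℝ C ξ ξ = d * C ξ := by
  have hopen : IsOpen ({(0 : Fin 2 → ℝ)}ᶜ) := isOpen_compl_singleton
  have hdiff : DifferentiableAt ℝ C ξ :=
    (hsmooth.differentiableOn one_ne_zero).differentiableAt (hopen.mem_nhds hξ)
  have h1 : HasDerivAt (fun β : ℝ => C (β • ξ)) (fderiv ℝ C ξ ξ) 1 := by
    have hs : HasDerivAt (fun β : ℝ => β • ξ) ξ 1 := by
      simpa using (hasDerivAt_id (1:ℝ)).smul_const ξ
    have hdiff' : HasFDerivAt C (fderiv ℝ C ξ) ((1:ℝ) • ξ) := by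
      rw [one_smul]; exact hdiff.hasFDerivAt
    exact hdiff'.comp_hasDerivAt 1 hs
  have h2 : HasDerivAt (fun β : ℝ => β ^ d * C ξ) (d * C ξ) 1 := by
    have := (Real.hasDerivAt_rpow_const (p := d) (x := 1) (Or.inl one_ne_zero)).mul_const (C ξ)
    simpa using this
  have heq : (fun β : ℝ => C (β • ξ)) =ᶠ[nhds 1] (fun β : ℝ => β ^ d * C ξ) := by
    filter_upwards [eventually_gt_nhds zero_lt_one] with β hβ
    rw [hhom β hβ.ne' ξ hξ, abs_of_pos hβ]
  exact h1.unique (h2.congr_of_eventuallyEq heq)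

private lemma side (d δ : ℝ) (C : (Fin 2 → ℝ) → ℝ)
    (hsmooth : ContDiffOn ℝ 1 C {(0 : Fin 2 → ℝ)}ᶜ)
    (hhom : ∀ β : ℝ, β ≠ 0 → ∀ q : Fin 2 → ℝ, q ≠ 0 → C (β • q) = |β| ^ d * C q)
    (hgrad : ∀ ξ : Fin 2 → ℝ, (0 ≤ ξ 0 ∧ 0 ≤ ξ 1 ∧ ξ 0 + ξ 1 = 1) →
      ∀ j : Fin 2, 0 < ξ j →
        δ < fderiv ℝ C ξ (Pi.single j 1) - (d - 1) * C ξ)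
    (j k : Fin 2) (hjk : j ≠ k) :
    ∀ t ∈ Set.Ioc (0:ℝ) 1,
      (C (Pi.single j 1) - δ) * t ≤
        C (t • (Pi.single j 1 : Fin 2 → ℝ) + (1 - t) • (Pi.single k 1 : Fin 2 → ℝ)) - δ := by
  set γ : ℝ → (Fin 2 → ℝ) :=
    fun t => t • (Pi.single j 1 : Fin 2 → ℝ) + (1 - t) • (Pi.single k 1 : Fin 2 → ℝ) with hγdef
  have hγj : ∀ t, γ t j = t := by
    intro t
    simp [hγdef, Pi.single_eq_same, Pi.single_eq_of_ne hjk]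
  have hγk : ∀ t, γ t k = 1 - t := by
    intro t
    simp [hγdef, Pi.single_eq_same, Pi.single_eq_of_ne hjk.symm]
  have hne : ∀ t, γ t ≠ 0 := by
    intro t h0
    have h1 := congrFun h0 j
    have h2 := congrFun h0 k
    rw [hγj] at h1
    rw [hγk] at h2
    simp at h1 h2
    linarith
  have hopen : IsOpen ({(0 : Fin 2 → ℝ)}ᶜ) := isOpen_compl_singleton
  have hdiffC : ∀ t, DifferentiableAt ℝ C (γ t) := fun t =>
    (hsmooth.differentiableOn one_ne_zero).differentiableAt (hopen.mem_nhds (hne t))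
  have hγd : ∀ t : ℝ, HasDerivAt γ (Pi.single j 1 - Pi.single k 1) t := by
    intro t
    have h1 : HasDerivAt (fun t : ℝ => t • (Pi.single j 1 : Fin 2 → ℝ)) (Pi.single j 1) t := by
      simpa using (hasDerivAt_id t).smul_const (Pi.single j (1:ℝ) : Fin 2 → ℝ)
    have h2 : HasDerivAt (fun t : ℝ => (1 - t) • (Pi.single k 1 : Fin 2 → ℝ)) (-Pi.single k 1) t := by
      simpa using ((hasDerivAt_const t (1:ℝ)).sub (hasDerivAt_id t)).smul_const (Pi.single k (1:ℝ) : Fin 2 → ℝ)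
    rw [sub_eq_add_neg]; exact h1.add h2
  have hh : ∀ t : ℝ, HasDerivAt (fun t => C (γ t))
      (fderiv ℝ C (γ t) (Pi.single j 1 - Pi.single k 1)) t := fun t =>
    (hdiffC t).hasFDerivAt.comp_hasDerivAt t (hγd t)
  have hdiffh : Differentiable ℝ (fun t => C (γ t)) := fun t => (hh t).differentiableAt
  have hcond : ∀ t ∈ Set.Ioo (0:ℝ) 1, t * deriv (fun t => C (γ t)) t < C (γ t) - δ := by
    intro t ht
    rw [(hh t).deriv]
    -- simplex membership of γ t
    have hmem : 0 ≤ γ t 0 ∧ 0 ≤ γ t 1 ∧ γ t 0 + γ t 1 = 1 := by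
      have hall : ∀ i : Fin 2, i = j ∨ i = k := by
        intro i; fin_cases i <;> fin_cases j <;> fin_cases k <;> simp_all
      have hv : ∀ i : Fin 2, γ t i = t ∨ γ t i = 1 - t := by
        intro i
        rcases hall i with rfl | rfl
        · exact Or.inl (hγj t)
        · exact Or.inr (hγk t)
      have h01 : (0:Fin 2) ≠ 1 := by decide
      have hsum : γ t 0 + γ t 1 = 1 := by
        rcases hall 0 with h0 | h0 <;> rcases hall 1 with h1 | h1
        · exact absurd (h0.trans h1.symm) (by decide)
        · rw [h0, h1, hγj, hγk]; ring
        · rw [h0, h1, hγj, hγk]; ring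
        · exact absurd (h0.trans h1.symm) (by decide)
      refine ⟨?_, ?_, hsum⟩
      · rcases hv 0 with h | h <;> rw [h] <;> linarith [ht.1, ht.2]
      · rcases hv 1 with h | h <;> rw [h] <;> linarith [ht.1, ht.2]
    have hg := hgrad (γ t) hmem k (by rw [hγk]; linarith [ht.2])
    have heul : fderiv ℝ C (γ t) (γ t) = d * C (γ t) :=
      euler2 d C hsmooth hhom (γ t) (hne t)
    have hlin : fderiv ℝ C (γ t) (γ t) =
        t * fderiv ℝ C (γ t) (Pi.single j 1) + (1 - t) * fderiv ℝ C (γ t) (Pi.single k 1) := by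
      conv_lhs => rw [hγdef]
      simp
      rfl
    rw [hlin] at heul
    rw [map_sub]
    nlinarith [hg, heul]
  intro t ht
  have := key0 δ (fun t => C (γ t)) hdiffh hcond t ht
  have hγ1 : γ 1 = Pi.single j 1 := by
    funext i
    simp [hγdef]
  show (C (Pi.single j 1) - δ) * t ≤ C (γ t) - δ
  simpa [hγ1] using this



/-- Monotone δ-causality for homogeneous costs when `m = 2`.
Let `C` be continuously differentiable on `ℝ² \ {0}`, homogeneous of degree `d`,
convex on the probability simplex `Ξ₂`, and suppose
`∂C/∂ξ_j(ξ) − (d−1)C(ξ) > δ` whenever `ξ ∈ Ξ₂` and `ξ_j > 0`.  Then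
`C(ξ) ≥ max(C₁ξ₁ + δξ₂, δξ₁ + C₂ξ₂)` on `Ξ₂`, where `C₁ = C(1,0)`, `C₂ = C(0,1)`. -/
theorem stmt6 (d δ : ℝ) (hδ : 0 ≤ δ) (C : (Fin 2 → ℝ) → ℝ)
    (hsmooth : ContDiffOn ℝ 1 C {(0 : Fin 2 → ℝ)}ᶜ)
    (hhom : ∀ β : ℝ, β ≠ 0 → ∀ q : Fin 2 → ℝ, q ≠ 0 → C (β • q) = |β| ^ d * C q)
    (hconv : ConvexOn ℝ {ξ : Fin 2 → ℝ | 0 ≤ ξ 0 ∧ 0 ≤ ξ 1 ∧ ξ 0 + ξ 1 = 1} C)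
    (hgrad : ∀ ξ : Fin 2 → ℝ, (0 ≤ ξ 0 ∧ 0 ≤ ξ 1 ∧ ξ 0 + ξ 1 = 1) →
      ∀ j : Fin 2, 0 < ξ j →
        δ < fderiv ℝ C ξ (Pi.single j 1) - (d - 1) * C ξ) :
    ∀ ξ : Fin 2 → ℝ, (0 ≤ ξ 0 ∧ 0 ≤ ξ 1 ∧ ξ 0 + ξ 1 = 1) →
      max (C ![1, 0] * ξ 0 + δ * ξ 1) (δ * ξ 0 + C ![0, 1] * ξ 1) ≤ C ξ := by
  have e0 : (![1, 0] : Fin 2 → ℝ) = Pi.single 0 1 := by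
    funext i; fin_cases i <;> simp
  have e1 : (![0, 1] : Fin 2 → ℝ) = Pi.single 1 1 := by
    funext i; fin_cases i <;> simp
  have hne : ∀ j : Fin 2, (Pi.single j 1 : Fin 2 → ℝ) ≠ 0 := by
    intro j h
    have := congrFun h j
    simp at this
  -- δ < C (Pi.single j 1) for each j
  have hCj : ∀ j : Fin 2, δ < C (Pi.single j 1) := by
    intro j
    have hmem : 0 ≤ (Pi.single j 1 : Fin 2 → ℝ) 0 ∧ 0 ≤ (Pi.single j 1 : Fin 2 → ℝ) 1 ∧
        (Pi.single j 1 : Fin 2 → ℝ) 0 + (Pi.single j 1 : Fin 2 → ℝ) 1 = 1 := by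
      fin_cases j <;> refine ⟨?_, ?_, ?_⟩ <;> simp
    have hg := hgrad (Pi.single j 1) hmem j (by simp)
    have he := euler2 d C hsmooth hhom (Pi.single j 1) (hne j)
    rw [he] at hg
    nlinarith [hg]
  intro ξ ⟨h0, h1, hsum⟩
  apply max_le
  · -- C₁ ξ₀ + δ ξ₁ ≤ C ξ
    rw [e0]
    rcases eq_or_lt_of_le h0 with hz | hp
    · -- ξ 0 = 0, ξ = Pi.single 1 1
      have hξ1 : ξ 1 = 1 := by linarith
      have hξeq : ξ = Pi.single 1 1 := by
        funext i; fin_cases i <;> simp [← hz, hξ1]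
      rw [hξeq]
      simp only [Pi.single_eq_same, Pi.single_eq_of_ne (by decide : (0:Fin 2) ≠ 1)]
      nlinarith [hCj 1]
    · have hξeq : ξ = ξ 0 • (Pi.single 0 1 : Fin 2 → ℝ) +
          (1 - ξ 0) • (Pi.single 1 1 : Fin 2 → ℝ) := by
        funext i; fin_cases i <;> simp <;> linarith
      have hs := side d δ C hsmooth hhom hgrad 0 1 (by decide) (ξ 0) ⟨hp, by linarith⟩
      rw [← hξeq] at hs
      have hξ1 : ξ 1 = 1 - ξ 0 := by linarith
      nlinarith [hs]
  · rw [e1]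
    rcases eq_or_lt_of_le h1 with hz | hp
    · have hξ0 : ξ 0 = 1 := by linarith
      have hξeq : ξ = Pi.single 0 1 := by
        funext i; fin_cases i <;> simp [← hz, hξ0]
      rw [hξeq]
      simp only [Pi.single_eq_same, Pi.single_eq_of_ne (by decide : (1:Fin 2) ≠ 0)]
      nlinarith [hCj 0]
    · have hξeq : ξ = ξ 1 • (Pi.single 1 1 : Fin 2 → ℝ) +
          (1 - ξ 1) • (Pi.single 0 1 : Fin 2 → ℝ) := by
        funext i; fin_cases i <;> simp <;> linarith
      have hs := side d δ C hsmooth hhom hgrad 1 0 (by decide) (ξ 1) ⟨hp, by linarith⟩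
      rw [← hξeq] at hs
      have hξ0 : ξ 0 = 1 - ξ 1 := by linarith
      nlinarith [hs]
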